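/- A linear pencil A(x) = A_0 + x_1 A_1 + ... + x_n A_n of symmetric real α×α matrices is strongly infeasible (i.e., the distance between {A(x) : x ∈ ℝ^n} and the cone of positive semidefinite α×α matrices is positive) if and only if there exist c ≥ 0 and finitely many vectors u_i ∈ ℝ^α such that -1 = c + Σ_i u_i^* A(x) u_i as a polynomial identity in x (equivalently, Σ_i u_i^* A_j u_i = 0 for j = 1,...,n and Σ_i u_i^* A_0 u_i = -1 - c). -/

import Mathlib

open MvPolynomial Matrix
attribute [local instance] Matrix.frobeniusNormedAddCommGroup
attribute [local instance] Matrix.frobeniusNormedSpace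

noncomputable section

open scoped MatrixOrder

abbrev RP (n : ℕ) := MvPolynomial (Fin n) ℝ

/-- Evaluation of the linear pencil `A₀ + ∑ xᵢ Aᵢ` at a point `x ∈ ℝⁿ`. -/
def pencilEval {n α : ℕ} (A0 : Matrix (Fin α) (Fin α) ℝ) (A : Fin n → Matrix (Fin α) (Fin α) ℝ)
    (x : Fin n → ℝ) : Matrix (Fin α) (Fin α) ℝ :=
  A0 + ∑ i, x i • A i

/-- The linear pencil `A₀ + ∑ xᵢ Aᵢ` as a matrix of polynomials. -/
def pencilPoly {n α : ℕ} (A0 : Matrix (Fin α) (Fin α) ℝ) (A : Fin n → Matrix (Fin α) (Fin α) ℝ) :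
    Matrix (Fin α) (Fin α) (RP n) :=
  A0.map C + ∑ i, (X i : RP n) • (A i).map C

/-- `v^* M v` for a matrix of polynomials. -/
def quadForm {n α : ℕ} (M : Matrix (Fin α) (Fin α) (RP n)) (v : Fin α → RP n) : RP n :=
  v ⬝ᵥ (M *ᵥ v)

/-- A sum of squares of polynomials. -/
def IsSos {n : ℕ} (p : RP n) : Prop := ∃ (k : ℕ) (q : Fin k → RP n), p = ∑ i, q i ^ 2

/-- An sos-matrix: a finite sum `∑ vⱼ vⱼ^*` with `vⱼ` vectors of polynomials. -/
def IsSosMatrix {n α : ℕ} (S : Matrix (Fin α) (Fin α) (RP n)) : Prop :=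
  ∃ (k : ℕ) (v : Fin k → Fin α → RP n), S = ∑ j, Matrix.vecMulVec (v j) (v j)

/-- Membership in the quadratic module `M_A` associated to the pencil. -/
def InQuadModule {n α : ℕ} (A0 : Matrix (Fin α) (Fin α) ℝ)
    (A : Fin n → Matrix (Fin α) (Fin α) ℝ) (p : RP n) : Prop :=
  ∃ s, IsSos s ∧ ∃ (k : ℕ) (v : Fin k → Fin α → RP n),
    p = s + ∑ j, quadForm (pencilPoly A0 A) (v j)

/-- Strong infeasibility: positive distance (Frobenius norm) between the range of the
pencil and the PSD cone. -/
def StronglyInfeasible {n α : ℕ} (A0 : Matrix (Fin α) (Fin α) ℝ)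
    (A : Fin n → Matrix (Fin α) (Fin α) ℝ) : Prop :=
  ∃ ε > (0:ℝ), ∀ (x : Fin n → ℝ) (B : Matrix (Fin α) (Fin α) ℝ), B.PosSemidef →
    ε ≤ dist (pencilEval A0 A x) B

namespace SturmAux


variable {α : ℕ}

lemma frob_norm_eq (M : Matrix (Fin α) (Fin α) ℝ) :
    ‖M‖ = Real.sqrt (∑ a, ∑ b, (M a b) ^ 2) := by
  rw [Matrix.frobenius_norm_def, Real.sqrt_eq_rpow]
  congr 1
  refine Finset.sum_congr rfl fun a _ => Finset.sum_congr rfl fun b _ => ?_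
  rw [Real.norm_eq_abs, show (2:ℝ) = ((2:ℕ):ℝ) by norm_num, Real.rpow_natCast, sq_abs]

lemma frob_entry_le (M : Matrix (Fin α) (Fin α) ℝ) (a b : Fin α) : |M a b| ≤ ‖M‖ := by
  rw [frob_norm_eq]
  have h1 : (M a b) ^ 2 ≤ ∑ a', ∑ b', (M a' b') ^ 2 := by
    calc (M a b) ^ 2 ≤ ∑ b', (M a b') ^ 2 :=
          Finset.single_le_sum (f := fun b' => (M a b') ^ 2)
            (fun i _ => sq_nonneg _) (Finset.mem_univ b)
      _ ≤ ∑ a', ∑ b', (M a' b') ^ 2 :=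
          Finset.single_le_sum (f := fun a' => ∑ b', (M a' b') ^ 2)
            (fun i _ => Finset.sum_nonneg fun j _ => sq_nonneg _) (Finset.mem_univ a)
  have := Real.le_sqrt_of_sq_le (y := ∑ a', ∑ b', (M a' b') ^ 2) (x := |M a b|)
    (by rwa [sq_abs])
  exact this

lemma quad_abs_le (u : Fin α → ℝ) (M : Matrix (Fin α) (Fin α) ℝ) :
    |u ⬝ᵥ (M *ᵥ u)| ≤ (∑ a, |u a|) ^ 2 * ‖M‖ := by
  have h : u ⬝ᵥ (M *ᵥ u) = ∑ a, ∑ b, u a * M a b * u b := by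
    simp [dotProduct, Matrix.mulVec, Finset.mul_sum, mul_assoc]
  rw [h]
  calc |∑ a, ∑ b, u a * M a b * u b| ≤ ∑ a, ∑ b, |u a * M a b * u b| := by
        refine (Finset.abs_sum_le_sum_abs _ _).trans ?_
        exact Finset.sum_le_sum fun a _ => Finset.abs_sum_le_sum_abs _ _
    _ ≤ ∑ a, ∑ b, |u a| * |u b| * ‖M‖ := by
        refine Finset.sum_le_sum fun a _ => Finset.sum_le_sum fun b _ => ?_
        rw [abs_mul, abs_mul]
        calc |u a| * |M a b| * |u b| ≤ |u a| * ‖M‖ * |u b| := by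
              have := frob_entry_le M a b
              have h1 : (0:ℝ) ≤ |u a| := abs_nonneg _
              have h2 : (0:ℝ) ≤ |u b| := abs_nonneg _
              have h3 : (0:ℝ) ≤ |u a| * |u b| := mul_nonneg h1 h2
              nlinarith [mul_le_mul_of_nonneg_left this h3]
          _ = |u a| * |u b| * ‖M‖ := by ring
    _ = (∑ a, |u a|) ^ 2 * ‖M‖ := by
        rw [sq, Finset.sum_mul_sum, Finset.sum_mul]
        refine Finset.sum_congr rfl fun a _ => ?_
        rw [Finset.sum_mul]


lemma posSemidef_smul {B : Matrix (Fin α) (Fin α) ℝ} (hB : B.PosSemidef) {t : ℝ} (ht : 0 ≤ t) :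
    (t • B).PosSemidef := by
  refine Matrix.PosSemidef.of_dotProduct_mulVec_nonneg ?_ ?_
  · unfold Matrix.IsHermitian
    rw [Matrix.conjTranspose_smul, hB.1.eq]
    simp
  · intro x
    rw [Matrix.smul_mulVec, dotProduct_smul]
    exact mul_nonneg ht (hB.dotProduct_mulVec_nonneg x)

lemma vecMulVec_isSymm (v : Fin α → ℝ) : (Matrix.vecMulVec v v).IsSymm := by
  ext a b
  simp [Matrix.vecMulVec_apply, mul_comm]

lemma vecMulVec_posSemidef (v : Fin α → ℝ) : (Matrix.vecMulVec v v).PosSemidef := by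
  refine Matrix.PosSemidef.of_dotProduct_mulVec_nonneg ?_ ?_
  · unfold Matrix.IsHermitian
    ext a b
    simp [Matrix.vecMulVec_apply, mul_comm]
  · intro x
    have h : Matrix.vecMulVec v v *ᵥ x = (v ⬝ᵥ x) • v := by
      ext a
      simp only [Matrix.mulVec, Matrix.vecMulVec_apply, dotProduct, Pi.smul_apply,
        smul_eq_mul, Finset.mul_sum]
      rw [Finset.sum_mul]
      refine Finset.sum_congr rfl fun b _ => by ring
    rw [h]
    have : star x ⬝ᵥ (v ⬝ᵥ x) • v = (v ⬝ᵥ x) * (x ⬝ᵥ v) := by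
      simp [dotProduct_smul, mul_comm]
    rw [this, dotProduct_comm]
    exact mul_self_nonneg _

lemma repr_lin (f : Matrix (Fin α) (Fin α) ℝ →L[ℝ] ℝ) (M : Matrix (Fin α) (Fin α) ℝ) :
    f M = ∑ a, ∑ b, M a b * f (Matrix.single a b 1) := by
  conv_lhs => rw [Matrix.matrix_eq_sum_single M]
  rw [map_sum]
  refine Finset.sum_congr rfl fun a _ => ?_
  rw [map_sum]
  refine Finset.sum_congr rfl fun b _ => ?_
  rw [show Matrix.single a b (M a b) = M a b • Matrix.single a b 1 by
    rw [Matrix.smul_single, smul_eq_mul, mul_one], _root_.map_smul, smul_eq_mul]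

/-- symmetrized representing matrix -/
def Wmat (f : Matrix (Fin α) (Fin α) ℝ →L[ℝ] ℝ) : Matrix (Fin α) (Fin α) ℝ :=
  Matrix.of fun a b =>
    (f (Matrix.single a b 1) + f (Matrix.single b a 1)) / 2

lemma repr_symm (f : Matrix (Fin α) (Fin α) ℝ →L[ℝ] ℝ) {M : Matrix (Fin α) (Fin α) ℝ}
    (hM : M.IsSymm) : f M = ∑ a, ∑ b, M a b * Wmat f a b := by
  have h1 : ∑ a, ∑ b, M a b * f (Matrix.single b a 1)
      = ∑ a, ∑ b, M a b * f (Matrix.single a b 1) := by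
    rw [Finset.sum_comm]
    refine Finset.sum_congr rfl fun a _ => Finset.sum_congr rfl fun b _ => ?_
    rw [hM.apply a b]
  have h2 : ∑ a, ∑ b, M a b * Wmat f a b
      = (∑ a, ∑ b, M a b * f (Matrix.single a b 1)
        + ∑ a, ∑ b, M a b * f (Matrix.single b a 1)) / 2 := by
    rw [← Finset.sum_add_distrib, Finset.sum_div]
    refine Finset.sum_congr rfl fun a _ => ?_
    rw [← Finset.sum_add_distrib, Finset.sum_div]
    refine Finset.sum_congr rfl fun b _ => ?_
    simp only [Wmat, Matrix.of_apply]
    ring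
  rw [h2, h1, repr_lin f M]
  ring

lemma wmat_posSemidef (f : Matrix (Fin α) (Fin α) ℝ →L[ℝ] ℝ)
    (hf : ∀ B : Matrix (Fin α) (Fin α) ℝ, B.PosSemidef → 0 ≤ f B) :
    (Wmat f).PosSemidef := by
  refine Matrix.PosSemidef.of_dotProduct_mulVec_nonneg ?_ ?_
  · unfold Matrix.IsHermitian
    ext a b
    simp only [Matrix.conjTranspose_apply, Wmat, Matrix.of_apply, star_trivial]
    ring
  · intro x
    have h : star x ⬝ᵥ (Wmat f *ᵥ x) = ∑ a, ∑ b, (Matrix.vecMulVec x x) a b * Wmat f a b := by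
      simp only [star_trivial, dotProduct, Matrix.mulVec, Matrix.vecMulVec_apply]
      refine Finset.sum_congr rfl fun a _ => ?_
      rw [Finset.mul_sum]
      refine Finset.sum_congr rfl fun b _ => by ring
    rw [h, ← repr_symm f (vecMulVec_isSymm x)]
    exact hf _ (vecMulVec_posSemidef x)

lemma sqrt_col_sum {W : Matrix (Fin α) (Fin α) ℝ} (hW : W.PosSemidef)
    (M : Matrix (Fin α) (Fin α) ℝ) :
    ∑ i, (fun a => CFC.sqrt W a i) ⬝ᵥ (M *ᵥ fun a => CFC.sqrt W a i)
      = ∑ a, ∑ b, M a b * W a b := by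
  set S := CFC.sqrt W with hSdef
  have hherm : Sᴴ = S := (CFC.sqrt_nonneg W).posSemidef.1
  have hsym : ∀ a b, S b a = S a b := by
    intro a b
    conv_lhs => rw [← hherm]
    simp [Matrix.conjTranspose_apply]
  have hw : ∀ a b, W a b = ∑ i, S a i * S b i := by
    intro a b
    conv_lhs => rw [← CFC.sqrt_mul_sqrt_self W hW.nonneg]
    rw [Matrix.mul_apply]
    exact Finset.sum_congr rfl fun i _ => by rw [← hSdef, hsym b i]
  have hL : ∀ i, (fun a => S a i) ⬝ᵥ (M *ᵥ fun a => S a i)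
      = ∑ a, ∑ b, S a i * (M a b * S b i) := by
    intro i
    simp [dotProduct, Matrix.mulVec, Finset.mul_sum]
  simp only [hL]
  rw [Finset.sum_comm]
  refine Finset.sum_congr rfl fun a _ => ?_
  rw [Finset.sum_comm]
  refine Finset.sum_congr rfl fun b _ => ?_
  rw [hw a b, Finset.mul_sum]
  exact Finset.sum_congr rfl fun i _ => by ring


variable {k : ℕ}

/-- sum of quadratic forms -/
def quadSum (u : Fin k → Fin α → ℝ) (M : Matrix (Fin α) (Fin α) ℝ) : ℝ :=
  ∑ i, u i ⬝ᵥ (M *ᵥ u i)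

lemma quadSum_sub (u : Fin k → Fin α → ℝ) (M N : Matrix (Fin α) (Fin α) ℝ) :
    quadSum u (M - N) = quadSum u M - quadSum u N := by
  unfold quadSum
  rw [← Finset.sum_sub_distrib]
  refine Finset.sum_congr rfl fun i _ => ?_
  rw [Matrix.sub_mulVec, dotProduct_sub]

lemma quadSum_add (u : Fin k → Fin α → ℝ) (M N : Matrix (Fin α) (Fin α) ℝ) :
    quadSum u (M + N) = quadSum u M + quadSum u N := by
  unfold quadSum
  rw [← Finset.sum_add_distrib]
  refine Finset.sum_congr rfl fun i _ => ?_
  rw [Matrix.add_mulVec, dotProduct_add]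

lemma quadSum_smul (u : Fin k → Fin α → ℝ) (c : ℝ) (M : Matrix (Fin α) (Fin α) ℝ) :
    quadSum u (c • M) = c * quadSum u M := by
  unfold quadSum
  rw [Finset.mul_sum]
  refine Finset.sum_congr rfl fun i _ => ?_
  rw [Matrix.smul_mulVec, dotProduct_smul, smul_eq_mul]

lemma quadSum_sum {ι : Type*} (u : Fin k → Fin α → ℝ) (s : Finset ι)
    (F : ι → Matrix (Fin α) (Fin α) ℝ) :
    quadSum u (∑ j ∈ s, F j) = ∑ j ∈ s, quadSum u (F j) := by
  classical
  induction s using Finset.induction with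
  | empty => simp [quadSum]
  | insert _ _ h ih =>
      rw [Finset.sum_insert h, Finset.sum_insert h, quadSum_add, ih]

lemma quadSum_nonneg (u : Fin k → Fin α → ℝ) {M : Matrix (Fin α) (Fin α) ℝ}
    (hM : M.PosSemidef) : 0 ≤ quadSum u M :=
  Finset.sum_nonneg fun i _ => by simpa using hM.dotProduct_mulVec_nonneg (u i)

lemma quadSum_abs_le (u : Fin k → Fin α → ℝ) (M : Matrix (Fin α) (Fin α) ℝ) :
    |quadSum u M| ≤ (∑ i, (∑ a, |u i a|) ^ 2) * ‖M‖ := by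
  calc |quadSum u M| ≤ ∑ i, |u i ⬝ᵥ (M *ᵥ u i)| := Finset.abs_sum_le_sum_abs _ _
    _ ≤ ∑ i, (∑ a, |u i a|) ^ 2 * ‖M‖ :=
        Finset.sum_le_sum fun i _ => quad_abs_le (u i) M
    _ = (∑ i, (∑ a, |u i a|) ^ 2) * ‖M‖ := by rw [Finset.sum_mul]


lemma pencil_combo {n α : ℕ} (A0 : Matrix (Fin α) (Fin α) ℝ)
    (A : Fin n → Matrix (Fin α) (Fin α) ℝ) (x y : Fin n → ℝ) (a b : ℝ) (hab : a + b = 1) :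
    pencilEval A0 A (a • x + b • y) = a • pencilEval A0 A x + b • pencilEval A0 A y := by
  unfold pencilEval
  have h1 : ∑ i, (a • x + b • y) i • A i
      = a • ∑ i, x i • A i + b • ∑ i, y i • A i := by
    rw [Finset.smul_sum, Finset.smul_sum, ← Finset.sum_add_distrib]
    refine Finset.sum_congr rfl fun i _ => ?_
    simp [add_smul, smul_smul]
  rw [h1, smul_add, smul_add, add_add_add_comm, ← add_smul, hab, one_smul]

lemma quadSum_pencil {n α k : ℕ} (A0 : Matrix (Fin α) (Fin α) ℝ)
    (A : Fin n → Matrix (Fin α) (Fin α) ℝ) (u : Fin k → Fin α → ℝ) (x : Fin n → ℝ) :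
    quadSum u (pencilEval A0 A x) = quadSum u A0 + ∑ j, x j * quadSum u (A j) := by
  unfold pencilEval
  rw [quadSum_add, quadSum_sum]
  congr 1
  exact Finset.sum_congr rfl fun j _ => quadSum_smul u (x j) (A j)

lemma pencil_f {n α : ℕ} (A0 : Matrix (Fin α) (Fin α) ℝ)
    (A : Fin n → Matrix (Fin α) (Fin α) ℝ) (f : Matrix (Fin α) (Fin α) ℝ →L[ℝ] ℝ)
    (x : Fin n → ℝ) :
    f (pencilEval A0 A x) = f A0 + ∑ j, x j * f (A j) := by
  unfold pencilEval
  rw [map_add, map_sum]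
  congr 1
  refine Finset.sum_congr rfl fun j _ => ?_
  rw [_root_.map_smul, smul_eq_mul]

end SturmAux

/-- Sturm's lemma: a linear pencil is strongly infeasible iff `-1 ∈ C_A`, i.e. there are
`c ≥ 0` and vectors `uᵢ ∈ ℝ^α` with `-1 = c + ∑ᵢ uᵢ^* A uᵢ` as polynomials (equivalently,
`∑ᵢ uᵢ^* Aⱼ uᵢ = 0` for `j = 1,…,n` and `∑ᵢ uᵢ^* A₀ uᵢ = -1 - c`). -/
theorem stmt_0 {n α : ℕ} (A0 : Matrix (Fin α) (Fin α) ℝ)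
    (A : Fin n → Matrix (Fin α) (Fin α) ℝ) (hA0 : A0.IsSymm) (hA : ∀ i, (A i).IsSymm) :
    StronglyInfeasible A0 A ↔
      ∃ c ≥ (0:ℝ), ∃ (k : ℕ) (u : Fin k → Fin α → ℝ),
        (∑ i, u i ⬝ᵥ (A0 *ᵥ u i)) = -1 - c ∧ ∀ j, (∑ i, u i ⬝ᵥ (A j *ᵥ u i)) = 0 := by
  constructor
  · -- forward direction
    rintro ⟨ε, hε, hsep⟩
    classical
    set P := pencilEval A0 A with hP
    set s : Set (Matrix (Fin α) (Fin α) ℝ) := ⋃ x, Metric.ball (P x) ε with hs_def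
    set t : Set (Matrix (Fin α) (Fin α) ℝ) := {B | B.PosSemidef} with ht_def
    have hsopen : IsOpen s := isOpen_iUnion fun _ => Metric.isOpen_ball
    have hsconv : Convex ℝ s := by
      intro M1 hM1 M2 hM2 a b ha hb hab
      obtain ⟨x, hx⟩ := Set.mem_iUnion.1 hM1
      obtain ⟨y, hy⟩ := Set.mem_iUnion.1 hM2
      rw [Metric.mem_ball, dist_eq_norm] at hx hy
      refine Set.mem_iUnion.2 ⟨a • x + b • y, ?_⟩
      rw [Metric.mem_ball, dist_eq_norm, hP, SturmAux.pencil_combo A0 A x y a b hab]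
      have hsplit : (a • M1 + b • M2) - (a • P x + b • P y)
          = a • (M1 - P x) + b • (M2 - P y) := by module
      rw [hsplit]
      have hle : ‖a • (M1 - P x) + b • (M2 - P y)‖
          ≤ a * ‖M1 - P x‖ + b * ‖M2 - P y‖ := by
        calc ‖a • (M1 - P x) + b • (M2 - P y)‖
            ≤ ‖a • (M1 - P x)‖ + ‖b • (M2 - P y)‖ := norm_add_le _ _
          _ = a * ‖M1 - P x‖ + b * ‖M2 - P y‖ := by
              rw [norm_smul, norm_smul, Real.norm_eq_abs, Real.norm_eq_abs,
                abs_of_nonneg ha, abs_of_nonneg hb]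
      have hnn1 : (0:ℝ) ≤ ‖M1 - P x‖ := norm_nonneg _
      have hnn2 : (0:ℝ) ≤ ‖M2 - P y‖ := norm_nonneg _
      rcases le_total ‖M1 - P x‖ ‖M2 - P y‖ with hc | hc
      · nlinarith
      · nlinarith
    have htconv : Convex ℝ t := by
      intro B1 h1 B2 h2 a b ha hb hab
      exact Matrix.PosSemidef.add (SturmAux.posSemidef_smul h1 ha)
        (SturmAux.posSemidef_smul h2 hb)
    have hdisj : Disjoint s t := by
      rw [Set.disjoint_left]
      intro M hM hMt
      obtain ⟨x, hx⟩ := Set.mem_iUnion.1 hM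
      rw [Metric.mem_ball, dist_comm] at hx
      exact absurd hx (not_lt.2 (hsep x M hMt))
    obtain ⟨f, u0, hfs, hft⟩ := geometric_hahn_banach_open hsconv hsopen htconv hdisj
    have hu0 : u0 ≤ 0 := by
      have := hft 0 Matrix.PosSemidef.zero
      simpa using this
    have hfP : ∀ x, f (P x) < u0 := fun x =>
      hfs _ (Set.mem_iUnion.2 ⟨x, Metric.mem_ball_self hε⟩)
    have hfpsd : ∀ B : Matrix (Fin α) (Fin α) ℝ, B.PosSemidef → 0 ≤ f B := by
      intro B hB
      by_contra hneg
      push_neg at hneg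
      have htt : 0 < (u0 - 1) / f B := div_pos_of_neg_of_neg (by linarith) hneg
      have h1 := hft _ (SturmAux.posSemidef_smul hB htt.le)
      rw [_root_.map_smul, smul_eq_mul, div_mul_cancel₀ _ (ne_of_lt hneg)] at h1
      linarith
    have hAj : ∀ j, f (A j) = 0 := by
      intro j
      by_contra hj
      have h := hfP (fun i => if i = j then (u0 - f A0) / f (A j) else 0)
      rw [hP, SturmAux.pencil_f A0 A f] at h
      have hsum : ∑ j', (if j' = j then (u0 - f A0) / f (A j) else 0) * f (A j')
          = (u0 - f A0) / f (A j) * f (A j) := by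
        rw [Finset.sum_eq_single j]
        · simp
        · intro b _ hb
          simp [hb]
        · intro hjj
          exact absurd (Finset.mem_univ j) hjj
      rw [hsum, div_mul_cancel₀ _ hj] at h
      linarith
    have hA0lt : f A0 < u0 := by
      have := hfP 0
      have h0 : P 0 = A0 := by simp [hP, pencilEval]
      rwa [h0] at this
    have hd : f A0 < 0 := lt_of_lt_of_le hA0lt hu0
    -- build the PSD representing matrix and its square root
    set W := SturmAux.Wmat f with hWdef
    have hW : W.PosSemidef := SturmAux.wmat_posSemidef f hfpsd
    have key : ∀ M : Matrix (Fin α) (Fin α) ℝ, M.IsSymm →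
        ∑ i, (fun a => CFC.sqrt W a i) ⬝ᵥ (M *ᵥ fun a => CFC.sqrt W a i) = f M := fun M hM =>
      (SturmAux.sqrt_col_sum hW M).trans (SturmAux.repr_symm f hM).symm
    set τ := Real.sqrt (1 / (-(f A0))) with hτdef
    have hτ2 : τ ^ 2 = 1 / (-(f A0)) := Real.sq_sqrt (div_pos one_pos (neg_pos.2 hd)).le
    refine ⟨0, le_refl 0, α, fun i => τ • fun a => CFC.sqrt W a i, ?_, ?_⟩
    · have hscale : ∀ i, (τ • fun a => CFC.sqrt W a i) ⬝ᵥ (A0 *ᵥ (τ • fun a => CFC.sqrt W a i))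
          = τ ^ 2 * ((fun a => CFC.sqrt W a i) ⬝ᵥ (A0 *ᵥ fun a => CFC.sqrt W a i)) := by
        intro i
        rw [Matrix.mulVec_smul, dotProduct_smul, smul_dotProduct,
          smul_eq_mul, smul_eq_mul, sq]
        ring
      rw [Finset.sum_congr rfl fun i _ => hscale i, ← Finset.mul_sum, key A0 hA0, hτ2]
      field_simp
      rw [div_self (ne_of_lt hd)]
      ring
    · intro j
      have hscale : ∀ i, (τ • fun a => CFC.sqrt W a i) ⬝ᵥ (A j *ᵥ (τ • fun a => CFC.sqrt W a i))
          = τ ^ 2 * ((fun a => CFC.sqrt W a i) ⬝ᵥ (A j *ᵥ fun a => CFC.sqrt W a i)) := by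
        intro i
        rw [Matrix.mulVec_smul, dotProduct_smul, smul_dotProduct,
          smul_eq_mul, smul_eq_mul, sq]
        ring
      rw [Finset.sum_congr rfl fun i _ => hscale i, ← Finset.mul_sum, key (A j) (hA j),
        hAj j, mul_zero]
  · -- backward direction
    rintro ⟨c, hc, k, u, hu0, huj⟩
    set K := ∑ i, (∑ a, |u i a|) ^ 2 with hKdef
    have hKnn : 0 ≤ K := Finset.sum_nonneg fun i _ => sq_nonneg _
    have hfix : ∀ x : Fin n → ℝ, SturmAux.quadSum u (pencilEval A0 A x) = -1 - c := by
      intro x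
      rw [SturmAux.quadSum_pencil]
      have h0 : SturmAux.quadSum u A0 = -1 - c := hu0
      have hj : ∀ j, SturmAux.quadSum u (A j) = 0 := huj
      simp [h0, hj]
    have hmain : ∀ (x : Fin n → ℝ) (B : Matrix (Fin α) (Fin α) ℝ), B.PosSemidef →
        1 ≤ K * dist (pencilEval A0 A x) B := by
      intro x B hB
      have hsub : SturmAux.quadSum u (pencilEval A0 A x - B)
          = (-1 - c) - SturmAux.quadSum u B := by
        rw [SturmAux.quadSum_sub, hfix x]
      have hBnn : 0 ≤ SturmAux.quadSum u B := SturmAux.quadSum_nonneg u hB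
      have hle : SturmAux.quadSum u (pencilEval A0 A x - B) ≤ -1 := by
        rw [hsub]; linarith
      have habs : 1 ≤ |SturmAux.quadSum u (pencilEval A0 A x - B)| := by
        rw [abs_of_nonpos (by linarith)]; linarith
      have hb := SturmAux.quadSum_abs_le u (pencilEval A0 A x - B)
      rw [dist_eq_norm]
      calc (1:ℝ) ≤ |SturmAux.quadSum u (pencilEval A0 A x - B)| := habs
        _ ≤ K * ‖pencilEval A0 A x - B‖ := hb
    have hK : 0 < K := by
      rcases hKnn.lt_or_eq with h | h
      · exact h
      · exfalso
        have := hmain 0 0 Matrix.PosSemidef.zero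
        rw [← h] at this
        simp at this
        linarith
    refine ⟨1 / K, by positivity, fun x B hB => ?_⟩
    have := hmain x B hB
    rw [mul_comm] at this
    exact (div_le_iff₀ hK).mpr this
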